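/- Let σ ⊆ ℝ^ρ be a convex cone, let e_1, …, e_ρ be a basis of the lattice ℤ^ρ ⊆ ℝ^ρ, and let C be the cube with vertices ±e_1 ± ⋯ ± e_ρ. Suppose D', D'' ∈ ℝ^ρ are such that for every vertex v = ±e_1 ± ⋯ ± e_ρ of C one has D' − D'' + v ∈ σ. Then the intersection (D' − σ) ∩ (D'' + σ) contains a lattice point of ℤ^ρ. -/

import Mathlib

/-- The embedding of the lattice `ℤ^ρ` into `ℝ^ρ`. -/
def latCoe {ρ : ℕ} (z : Fin ρ → ℤ) : Fin ρ → ℝ := fun i => (z i : ℝ)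

/-- A convex set containing all vertices of a parallelotope contains the whole
parallelotope. -/
lemma cube_mem {V : Type*} [AddCommGroup V] [Module ℝ V]
    {σ : Set V} (hconv : Convex ℝ σ) {n : ℕ} (x : V) (v : Fin n → V)
    (h : ∀ ε : Fin n → ℝ, (∀ i, ε i = 1 ∨ ε i = -1) → x + ∑ i, ε i • v i ∈ σ)
    (s : Fin n → ℝ) (hs : ∀ i, |s i| ≤ 1) : x + ∑ i, s i • v i ∈ σ := by
  classical
  suffices H : ∀ S : Finset (Fin n), ∀ s : Fin n → ℝ, (∀ i, |s i| ≤ 1) →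
      (∀ i ∉ S, s i = 1 ∨ s i = -1) → x + ∑ i, s i • v i ∈ σ by
    exact H Finset.univ s hs (fun i hi => absurd (Finset.mem_univ i) hi)
  intro S
  induction S using Finset.induction_on with
  | empty =>
    intro s hs1 hs2
    exact h s (fun i => hs2 i (Finset.notMem_empty i))
  | @insert a S ha IH =>
    intro s hs1 hs2
    have key : ∀ c : ℝ, ∑ i, Function.update s a c i • v i
        = c • v a + ∑ i ∈ Finset.univ.erase a, s i • v i := by
      intro c
      rw [← Finset.add_sum_erase _ _ (Finset.mem_univ a)]
      congr 1
      · simp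
      · exact Finset.sum_congr rfl fun i hi => by
          rw [Function.update_of_ne (Finset.ne_of_mem_erase hi)]
    have keys : ∑ i, s i • v i = s a • v a + ∑ i ∈ Finset.univ.erase a, s i • v i :=
      (Finset.add_sum_erase _ _ (Finset.mem_univ a)).symm
    have h1 : x + ∑ i, Function.update s a 1 i • v i ∈ σ := by
      apply IH
      · intro i
        rcases eq_or_ne i a with rfl | hne
        · simp
        · rw [Function.update_of_ne hne]; exact hs1 i
      · intro i hi
        rcases eq_or_ne i a with rfl | hne
        · left; simp
        · rw [Function.update_of_ne hne]
          exact hs2 i (by simp [hne, hi])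
    have h2 : x + ∑ i, Function.update s a (-1) i • v i ∈ σ := by
      apply IH
      · intro i
        rcases eq_or_ne i a with rfl | hne
        · simp
        · rw [Function.update_of_ne hne]; exact hs1 i
      · intro i hi
        rcases eq_or_ne i a with rfl | hne
        · right; simp
        · rw [Function.update_of_ne hne]
          exact hs2 i (by simp [hne, hi])
    have habs := hs1 a
    rw [abs_le] at habs
    have hθ0 : (0:ℝ) ≤ (s a + 1)/2 := by linarith [habs.1]
    have hθ1 : (0:ℝ) ≤ 1 - (s a + 1)/2 := by linarith [habs.2]
    have hmem := hconv h1 h2 hθ0 hθ1 (by ring)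
    have : ((s a + 1)/2) • (x + ∑ i, Function.update s a 1 i • v i)
        + (1 - (s a + 1)/2) • (x + ∑ i, Function.update s a (-1) i • v i)
        = x + ∑ i, s i • v i := by
      rw [key 1, key (-1), keys]
      module
    rwa [this] at hmem

theorem stmt_3 (ρ : ℕ) (σ : Set (Fin ρ → ℝ))
    (hconv : Convex ℝ σ) (hcone : ∀ c : ℝ, 0 < c → ∀ x ∈ σ, c • x ∈ σ)
    (e : Module.Basis (Fin ρ) ℤ (Fin ρ → ℤ))
    (D' D'' : Fin ρ → ℝ)
    (hvert : ∀ ε : Fin ρ → ℤ, (∀ i, ε i = 1 ∨ ε i = -1) →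
      D' - D'' + latCoe (∑ i, ε i • e i) ∈ σ) :
    ∃ z : Fin ρ → ℤ, D' - latCoe z ∈ σ ∧ latCoe z - D'' ∈ σ := by
  classical
  -- the midpoint
  set M : Fin ρ → ℝ := (1/2 : ℝ) • (D' + D'') with hMdef
  -- the matrix of `e` in the standard basis, over ℝ
  set B : Module.Basis (Fin ρ) ℤ (Fin ρ → ℤ) := Pi.basisFun ℤ (Fin ρ) with hB
  set P : Matrix (Fin ρ) (Fin ρ) ℤ := B.toMatrix e with hP
  haveI : Invertible P := B.invertibleToMatrix e
  set A : Matrix (Fin ρ) (Fin ρ) ℝ := (Int.castRingHom ℝ).mapMatrix P with hA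
  haveI : Invertible A := Invertible.map (Int.castRingHom ℝ).mapMatrix P
  set c : Fin ρ → ℝ := (⅟A).mulVec M with hc
  have hAc : A.mulVec c = M := by
    rw [hc, Matrix.mulVec_mulVec, mul_invOf_self, Matrix.one_mulVec]
  have hAentry : ∀ j i, A j i = (e i j : ℝ) := by
    intro j i
    simp [hA, hP, hB, Module.Basis.toMatrix, Pi.basisFun_repr]
  have hM : M = ∑ i, c i • latCoe (e i) := by
    funext j
    rw [← hAc]
    rw [Finset.sum_apply]
    simp only [Matrix.mulVec, dotProduct, Pi.smul_apply, latCoe, smul_eq_mul]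
    exact Finset.sum_congr rfl fun i _ => by rw [hAentry j i, mul_comm]
  -- the lattice point
  refine ⟨∑ i, round (c i) • e i, ?_, ?_⟩ <;>
  · set z : Fin ρ → ℤ := ∑ i, round (c i) • e i with hzdef
    have hz : latCoe z = ∑ i, ((round (c i) : ℝ)) • latCoe (e i) := by
      funext j
      rw [Finset.sum_apply]
      simp only [latCoe, hzdef, Finset.sum_apply, Pi.smul_apply, smul_eq_mul]
      push_cast
      rfl
    set s : Fin ρ → ℝ := fun i => 2 * (c i - (round (c i) : ℝ)) with hsdef
    have hs : ∀ i, |s i| ≤ 1 := by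
      intro i
      have := abs_sub_round (c i)
      rw [hsdef]
      rw [abs_mul, abs_two]
      linarith [abs_nonneg (c i - (round (c i):ℝ))]
    have hsum : ∑ i, s i • latCoe (e i) = (2:ℝ) • M - (2:ℝ) • latCoe z := by
      rw [hM, hz, Finset.smul_sum, Finset.smul_sum, ← Finset.sum_sub_distrib]
      exact Finset.sum_congr rfl fun i _ => by rw [hsdef]; module
    have hcube : ∀ t : Fin ρ → ℝ, (∀ i, |t i| ≤ 1) →
        D' - D'' + ∑ i, t i • latCoe (e i) ∈ σ := by
      intro t ht
      apply cube_mem hconv (D' - D'') (fun i => latCoe (e i)) _ t ht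
      intro ε hε
      have := hvert (fun i => if ε i = 1 then 1 else -1) (by
        intro i
        rcases hε i with h | h <;> simp only [h] <;> norm_num)
      have hlat : latCoe (∑ i, (fun i => if ε i = 1 then (1:ℤ) else -1) i • e i)
          = ∑ i, ε i • latCoe (e i) := by
        funext j
        simp only [latCoe, Finset.sum_apply, Pi.smul_apply, smul_eq_mul,
          Int.cast_sum, Int.cast_mul]
        refine Finset.sum_congr rfl fun i _ => ?_
        rcases hε i with h | h <;> simp only [h] <;> norm_num
      rwa [hlat] at this
    first
    | · -- D' - latCoe z
        have he : D' - latCoe z = (1/2:ℝ) • (D' - D'' + ∑ i, s i • latCoe (e i)) := by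
          rw [hsum, hMdef]
          module
        rw [he]
        exact hcone _ (by norm_num) _ (hcube s hs)
    | · -- latCoe z - D''
        have he : latCoe z - D'' = (1/2:ℝ) • (D' - D'' + ∑ i, (-(s i)) • latCoe (e i)) := by
          have hsum' : ∑ i, (-(s i)) • latCoe (e i) = (2:ℝ) • latCoe z - (2:ℝ) • M := by
            rw [← neg_sub]
            rw [← hsum, ← Finset.sum_neg_distrib]
            exact Finset.sum_congr rfl fun i _ => by module
          rw [hsum', hMdef]
          module
        rw [he]
        refine hcone _ (by norm_num) _ (hcube _ (fun i => by rw [abs_neg]; exact hs i))
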